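/- Let Ω := {(x,y,z) ∈ ℝ³ : x ≥ 0, y ≥ 0, 0 ≤ z ≤ √(xy)} and for p > 0 define the one-homogeneous function G_p : Ω → ℝ by G_p(x,y,z) := x + y + ( (v^{1/p} + v^{−1/p})^p − (v + v^{−1}) ) · z, where v := min{x/z, y/z, 1} for z > 0 and v := 1 for z = 0. Then G_p is concave on Ω when p ∈ (1,2), and G_p is convex on Ω when p ∈ (0,1] ∪ [2,∞). -/

import Mathlib

open Real Set

section AuxCalculus

noncomputable def psiF (p s : ℝ) : ℝ := (s ^ (1/p) + s ^ (-(1/p))) ^ p - s - s⁻¹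

noncomputable def dpsiF (p s : ℝ) : ℝ :=
  ((1/p) * s ^ (1/p - 1) - (1/p) * s ^ (-(1/p) - 1)) * p *
      (s ^ (1/p) + s ^ (-(1/p))) ^ (p - 1) - 1 + (s ^ 2)⁻¹

noncomputable def etaF (p w : ℝ) : ℝ := w ^ (-p) * ((1 + w) ^ (p - 1) * (w - 1) + 1)

noncomputable def GF (p w : ℝ) : ℝ := (1 + w) ^ (p - 2) * (p + (2 - p) * w)

lemma hasDerivAt_GF {p w : ℝ} (hw : (0:ℝ) < 1 + w) :
    HasDerivAt (GF p) ((p-1)*(p-2)*(1-w)*(1+w)^(p-3)) w := by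
  have h1 : HasDerivAt (fun w : ℝ => (1 + w) ^ (p - 2)) (1 * (p-2) * (1+w)^(p-2-1)) w :=
    (HasDerivAt.const_add 1 (hasDerivAt_id w)).rpow_const (Or.inl hw.ne')
  have h2 : HasDerivAt (fun w : ℝ => p + (2 - p) * w) (2 - p) w := by
    simpa using (HasDerivAt.const_add p ((hasDerivAt_id w).const_mul (2-p)))
  have := h1.mul h2
  refine this.congr_deriv ?_
  have e1 : p - 2 - 1 = p - 3 := by ring
  have e2 : (1+w)^(p-2) = (1+w)^(p-3) * (1+w) := by
    rw [← Real.rpow_add_one hw.ne' (p-3)]; ring_nf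
  rw [e1, e2]; ring

lemma GF_zero (p : ℝ) : GF p 0 = p := by simp [GF]

lemma GF_le {p : ℝ} (hc : (p-1)*(p-2) ≤ 0) {w : ℝ} (hw : w ∈ Icc (0:ℝ) 1) : GF p w ≤ p := by
  have hanti : AntitoneOn (GF p) (Icc (0:ℝ) 1) := by
    apply antitoneOn_of_deriv_nonpos (convex_Icc 0 1)
    · intro x hx
      exact (hasDerivAt_GF (by simp at hx; linarith)).continuousAt.continuousWithinAt
    · intro x hx
      rw [interior_Icc] at hx
      exact (hasDerivAt_GF (by simp at hx; linarith [hx.1])).differentiableAt.differentiableWithinAt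
    · intro x hx
      rw [interior_Icc] at hx
      rw [(hasDerivAt_GF (by linarith [hx.1] : (0:ℝ) < 1 + x)).deriv]
      have h3 : (0:ℝ) < (1+x)^(p-3) := Real.rpow_pos_of_pos (by linarith [hx.1]) _
      exact mul_nonpos_of_nonpos_of_nonneg
        (mul_nonpos_of_nonpos_of_nonneg hc (by linarith [hx.2])) h3.le
  have := hanti (left_mem_Icc.mpr zero_le_one) hw hw.1
  rwa [GF_zero] at this

lemma GF_ge {p : ℝ} (hc : 0 ≤ (p-1)*(p-2)) {w : ℝ} (hw : w ∈ Icc (0:ℝ) 1) : p ≤ GF p w := by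
  have hmono : MonotoneOn (GF p) (Icc (0:ℝ) 1) := by
    apply monotoneOn_of_deriv_nonneg (convex_Icc 0 1)
    · intro x hx
      exact (hasDerivAt_GF (by simp at hx; linarith)).continuousAt.continuousWithinAt
    · intro x hx
      rw [interior_Icc] at hx
      exact (hasDerivAt_GF (by linarith [hx.1] : (0:ℝ) < 1 + x)).differentiableAt.differentiableWithinAt
    · intro x hx
      rw [interior_Icc] at hx
      rw [(hasDerivAt_GF (by linarith [hx.1] : (0:ℝ) < 1 + x)).deriv]
      have h3 : (0:ℝ) < (1+x)^(p-3) := Real.rpow_pos_of_pos (by linarith [hx.1]) _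
      exact mul_nonneg (mul_nonneg hc (by linarith [hx.2])) h3.le
  have := hmono (left_mem_Icc.mpr zero_le_one) hw hw.1
  rwa [GF_zero] at this

lemma hasDerivAt_etaF {p w : ℝ} (hw : 0 < w) :
    HasDerivAt (etaF p) (w ^ (-p-1) * (GF p w - p)) w := by
  have h1w : (0:ℝ) < 1 + w := by linarith
  have h1 : HasDerivAt (fun w : ℝ => w ^ (-p)) ((-p) * w ^ (-p-1)) w := by
    simpa using hasDerivAt_rpow_const (p := -p) (Or.inl hw.ne')
  have h2 : HasDerivAt (fun w : ℝ => (1 + w) ^ (p-1)) (1 * (p-1) * (1+w)^(p-1-1)) w :=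
    (HasDerivAt.const_add 1 (hasDerivAt_id w)).rpow_const (Or.inl h1w.ne')
  have h3 : HasDerivAt (fun w : ℝ => w - 1) 1 w := by
    simpa using (hasDerivAt_id w).sub_const 1
  have h4 : HasDerivAt (fun w : ℝ => (1 + w) ^ (p-1) * (w - 1) + 1)
      ((1 * (p-1) * (1+w)^(p-1-1)) * (w-1) + (1+w)^(p-1) * 1) w :=
    ((h2.mul h3).add_const 1)
  have := h1.mul h4
  refine this.congr_deriv ?_
  -- algebraic identity
  have e1 : (1+w)^(p-1) = (1+w)^(p-2) * (1+w) := by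
    rw [← Real.rpow_add_one h1w.ne' (p-2)]; ring_nf
  have e2 : p - 1 - 1 = p - 2 := by ring
  have e3 : w ^ (-p) = w ^ (-p-1) * w := by
    rw [← Real.rpow_add_one hw.ne' (-p-1)]; ring_nf
  rw [GF, e2, e1, e3]; ring

lemma etaF_one (p : ℝ) : etaF p 1 = 1 := by
  simp [etaF]

lemma etaF_anti {p : ℝ} (hc : (p-1)*(p-2) ≤ 0) :
    AntitoneOn (etaF p) (Ioc (0:ℝ) 1) := by
  apply antitoneOn_of_deriv_nonpos (convex_Ioc 0 1)
  · intro x hx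
    exact (hasDerivAt_etaF hx.1).continuousAt.continuousWithinAt
  · intro x hx
    rw [interior_Ioc] at hx
    exact (hasDerivAt_etaF hx.1).differentiableAt.differentiableWithinAt
  · intro x hx
    rw [interior_Ioc] at hx
    rw [(hasDerivAt_etaF hx.1).deriv]
    have h1 : (0:ℝ) < x ^ (-p-1) := Real.rpow_pos_of_pos hx.1 _
    have h2 : GF p x ≤ p := GF_le hc ⟨hx.1.le, hx.2.le⟩
    exact mul_nonpos_of_nonneg_of_nonpos h1.le (by linarith)

lemma etaF_mono {p : ℝ} (hc : 0 ≤ (p-1)*(p-2)) :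
    MonotoneOn (etaF p) (Ioc (0:ℝ) 1) := by
  apply monotoneOn_of_deriv_nonneg (convex_Ioc 0 1)
  · intro x hx
    exact (hasDerivAt_etaF hx.1).continuousAt.continuousWithinAt
  · intro x hx
    rw [interior_Ioc] at hx
    exact (hasDerivAt_etaF hx.1).differentiableAt.differentiableWithinAt
  · intro x hx
    rw [interior_Ioc] at hx
    rw [(hasDerivAt_etaF hx.1).deriv]
    have h1 : (0:ℝ) < x ^ (-p-1) := Real.rpow_pos_of_pos hx.1 _
    have h2 : p ≤ GF p x := GF_ge hc ⟨hx.1.le, hx.2.le⟩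
    exact mul_nonneg h1.le (by linarith)

lemma hasDerivAt_psiF {p s : ℝ} (hp : 0 < p) (hs : 0 < s) :
    HasDerivAt (psiF p) (dpsiF p s) s := by
  have hr1 : HasDerivAt (fun s : ℝ => s ^ (1/p)) ((1/p) * s ^ (1/p - 1)) s :=
    hasDerivAt_rpow_const (Or.inl hs.ne')
  have hr2 : HasDerivAt (fun s : ℝ => s ^ (-(1/p))) ((-(1/p)) * s ^ (-(1/p) - 1)) s :=
    hasDerivAt_rpow_const (Or.inl hs.ne')
  have hA : (0:ℝ) < s ^ (1/p) + s ^ (-(1/p)) := by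
    have := Real.rpow_pos_of_pos hs (1/p); have := Real.rpow_pos_of_pos hs (-(1/p)); linarith
  have h1 : HasDerivAt (fun s : ℝ => (s ^ (1/p) + s ^ (-(1/p))) ^ p)
      (((1/p) * s ^ (1/p - 1) + (-(1/p)) * s ^ (-(1/p) - 1)) * p *
        (s ^ (1/p) + s ^ (-(1/p))) ^ (p - 1)) s :=
    (hr1.add hr2).rpow_const (Or.inl hA.ne')
  have h2 : HasDerivAt (fun s : ℝ => s⁻¹) (-(s^2)⁻¹) s := hasDerivAt_inv hs.ne'
  have := (h1.sub (hasDerivAt_id s)).sub h2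
  refine this.congr_deriv ?_
  simp only [dpsiF]; ring

lemma dpsiF_eq_etaF {p s : ℝ} (hp : 0 < p) (hs : 0 < s) :
    dpsiF p s = etaF p (s ^ (2/p)) - 1 := by
  have hw : (0:ℝ) < s ^ (2/p) := Real.rpow_pos_of_pos hs _
  set w := s ^ (2/p) with hwdef
  have hp' : p ≠ 0 := hp.ne'
  have f1 : s ^ (1/p - 1) = s ^ (-(1/p) - 1) * w := by
    rw [hwdef, ← Real.rpow_add hs]; congr 1; field_simp; ring
  have f2 : s ^ (1/p) = s ^ (-(1/p)) * w := by
    rw [hwdef, ← Real.rpow_add hs]; congr 1; field_simp; norm_num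
  have hw1 : (0:ℝ) < 1 + w := by linarith
  have f4 : (s ^ (1/p) + s ^ (-(1/p))) ^ (p-1) = s ^ (-(1/p)*(p-1)) * (1+w) ^ (p-1) := by
    rw [f2]
    have e : s ^ (-(1/p)) * w + s ^ (-(1/p)) = s ^ (-(1/p)) * (1 + w) := by ring
    rw [e, Real.mul_rpow (Real.rpow_pos_of_pos hs _).le hw1.le, ← Real.rpow_mul hs.le]
  have f5 : s ^ (-(1/p) - 1) * s ^ (-(1/p)*(p-1)) = s ^ (-2 : ℝ) := by
    rw [← Real.rpow_add hs]; congr 1; field_simp; ring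
  have f6 : w ^ (-p) = s ^ (-2 : ℝ) := by
    rw [hwdef, ← Real.rpow_mul hs.le]; congr 1; field_simp
  have f7 : (s^2)⁻¹ = s ^ (-2:ℝ) := by
    rw [Real.rpow_neg hs.le]
    norm_num [Real.rpow_natCast]
  rw [etaF, dpsiF, f1, f4, f6, f7]
  set a := s ^ (-(1/p) - 1)
  set b := s ^ (-(1/p)*(p-1))
  set c := s ^ (-2:ℝ)
  set W := (1+w) ^ (p-1)
  calc ((1/p) * (a * w) - (1/p) * a) * p * (b * W) - 1 + c
      = (a*b) * (W * (w-1)) - 1 + c := by field_simp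
    _ = c * (W * (w - 1) + 1) - 1 := by rw [f5]; ring

lemma dpsiF_one (p : ℝ) : dpsiF p 1 = 0 := by simp [dpsiF]

lemma rpow_mem_Ioc {p s : ℝ} (hp : 0 < p) (hs : s ∈ Ioc (0:ℝ) 1) :
    s ^ (2/p) ∈ Ioc (0:ℝ) 1 :=
  ⟨Real.rpow_pos_of_pos hs.1 _, Real.rpow_le_one hs.1.le hs.2 (by positivity)⟩

lemma dpsiF_anti {p : ℝ} (hp : 0 < p) (hc : (p-1)*(p-2) ≤ 0) :
    AntitoneOn (dpsiF p) (Ioc (0:ℝ) 1) := by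
  intro s1 h1 s2 h2 h12
  rw [dpsiF_eq_etaF hp h1.1, dpsiF_eq_etaF hp h2.1]
  have := etaF_anti hc (rpow_mem_Ioc hp h1) (rpow_mem_Ioc hp h2)
    (Real.rpow_le_rpow h1.1.le h12 (by positivity))
  linarith

lemma dpsiF_mono {p : ℝ} (hp : 0 < p) (hc : 0 ≤ (p-1)*(p-2)) :
    MonotoneOn (dpsiF p) (Ioc (0:ℝ) 1) := by
  intro s1 h1 s2 h2 h12
  rw [dpsiF_eq_etaF hp h1.1, dpsiF_eq_etaF hp h2.1]
  have := etaF_mono hc (rpow_mem_Ioc hp h1) (rpow_mem_Ioc hp h2)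
    (Real.rpow_le_rpow h1.1.le h12 (by positivity))
  linarith

lemma dpsiF_nonneg {p : ℝ} (hp : 0 < p) (hc : (p-1)*(p-2) ≤ 0) {s : ℝ}
    (hs : s ∈ Ioc (0:ℝ) 1) : 0 ≤ dpsiF p s := by
  have := dpsiF_anti hp hc hs (right_mem_Ioc.mpr one_pos) hs.2
  rw [dpsiF_one] at this; exact this

lemma dpsiF_nonpos {p : ℝ} (hp : 0 < p) (hc : 0 ≤ (p-1)*(p-2)) {s : ℝ}
    (hs : s ∈ Ioc (0:ℝ) 1) : dpsiF p s ≤ 0 := by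
  have := dpsiF_mono hp hc hs (right_mem_Ioc.mpr one_pos) hs.2
  rw [dpsiF_one] at this; exact this

/-- tangent line from above for the "concave" range, on (0,1]. -/
lemma tangent_conc {p : ℝ} (hp : 0 < p) (hc : (p-1)*(p-2) ≤ 0) {s X : ℝ}
    (hs : s ∈ Ioc (0:ℝ) 1) (hX : X ∈ Ioc (0:ℝ) 1) :
    psiF p X ≤ psiF p s + dpsiF p s * (X - s) := by
  rcases lt_trichotomy X s with h | h | h
  · obtain ⟨c, hc1, hc2⟩ := exists_hasDerivAt_eq_slope (psiF p) (dpsiF p) h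
      (fun x hx => (hasDerivAt_psiF hp (lt_of_lt_of_le hX.1 hx.1)).continuousAt.continuousWithinAt)
      (fun x hx => hasDerivAt_psiF hp (lt_trans hX.1 hx.1))
    have hcm : c ∈ Ioc (0:ℝ) 1 := ⟨lt_trans hX.1 hc1.1, le_trans hc1.2.le hs.2⟩
    have hmono := dpsiF_anti hp hc hcm hs hc1.2.le
    have hd : psiF p s - psiF p X = dpsiF p c * (s - X) := by
      rw [hc2]; field_simp [sub_ne_zero.mpr h.ne']
    nlinarith [hmono, hd, sub_pos.mpr h]
  · simp [h]
  · obtain ⟨c, hc1, hc2⟩ := exists_hasDerivAt_eq_slope (psiF p) (dpsiF p) h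
      (fun x hx => (hasDerivAt_psiF hp (lt_of_lt_of_le hs.1 hx.1)).continuousAt.continuousWithinAt)
      (fun x hx => hasDerivAt_psiF hp (lt_trans hs.1 hx.1))
    have hcm : c ∈ Ioc (0:ℝ) 1 := ⟨lt_trans hs.1 hc1.1, le_trans hc1.2.le hX.2⟩
    have hmono := dpsiF_anti hp hc hs hcm hc1.1.le
    have hd : psiF p X - psiF p s = dpsiF p c * (X - s) := by
      rw [hc2]; field_simp [sub_ne_zero.mpr h.ne']
    nlinarith [hmono, hd, sub_pos.mpr h]

lemma tangent_conv {p : ℝ} (hp : 0 < p) (hc : 0 ≤ (p-1)*(p-2)) {s X : ℝ}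
    (hs : s ∈ Ioc (0:ℝ) 1) (hX : X ∈ Ioc (0:ℝ) 1) :
    psiF p s + dpsiF p s * (X - s) ≤ psiF p X := by
  rcases lt_trichotomy X s with h | h | h
  · obtain ⟨c, hc1, hc2⟩ := exists_hasDerivAt_eq_slope (psiF p) (dpsiF p) h
      (fun x hx => (hasDerivAt_psiF hp (lt_of_lt_of_le hX.1 hx.1)).continuousAt.continuousWithinAt)
      (fun x hx => hasDerivAt_psiF hp (lt_trans hX.1 hx.1))
    have hcm : c ∈ Ioc (0:ℝ) 1 := ⟨lt_trans hX.1 hc1.1, le_trans hc1.2.le hs.2⟩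
    have hmono := dpsiF_mono hp hc hcm hs hc1.2.le
    have hd : psiF p s - psiF p X = dpsiF p c * (s - X) := by
      rw [hc2]; field_simp [sub_ne_zero.mpr h.ne']
    nlinarith [hmono, hd, sub_pos.mpr h]
  · simp [h]
  · obtain ⟨c, hc1, hc2⟩ := exists_hasDerivAt_eq_slope (psiF p) (dpsiF p) h
      (fun x hx => (hasDerivAt_psiF hp (lt_of_lt_of_le hs.1 hx.1)).continuousAt.continuousWithinAt)
      (fun x hx => hasDerivAt_psiF hp (lt_trans hs.1 hx.1))
    have hcm : c ∈ Ioc (0:ℝ) 1 := ⟨lt_trans hs.1 hc1.1, le_trans hc1.2.le hX.2⟩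
    have hmono := dpsiF_mono hp hc hs hcm hc1.1.le
    have hd : psiF p X - psiF p s = dpsiF p c * (X - s) := by
      rw [hc2]; field_simp [sub_ne_zero.mpr h.ne']
    nlinarith [hmono, hd, sub_pos.mpr h]

lemma psiF_symm {p s : ℝ} (hs : 0 < s) : psiF p s⁻¹ = psiF p s := by
  have e1 : s⁻¹ ^ (1/p) = s ^ (-(1/p)) := by
    rw [Real.inv_rpow hs.le, ← Real.rpow_neg hs.le]
  have e2 : s⁻¹ ^ (-(1/p)) = s ^ (1/p) := by
    rw [Real.inv_rpow hs.le, ← Real.rpow_neg hs.le, neg_neg]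
  unfold psiF
  rw [e1, e2, inv_inv]
  ring

lemma psiF_le_one {p : ℝ} (hp : 0 < p) (hc : (p-1)*(p-2) ≤ 0) {X : ℝ} (hX : 0 < X) :
    psiF p X ≤ psiF p 1 := by
  rcases le_or_gt X 1 with h | h
  · have := tangent_conc hp hc (right_mem_Ioc.mpr one_pos) ⟨hX, h⟩
    rw [dpsiF_one] at this; linarith
  · have hXi : X⁻¹ ∈ Ioc (0:ℝ) 1 := ⟨by positivity, by
      rw [inv_le_one₀ hX]; exact h.le⟩
    have := tangent_conc hp hc (right_mem_Ioc.mpr one_pos) hXi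
    rw [dpsiF_one, psiF_symm hX] at this
    simp only [zero_mul, add_zero] at this
    exact this

lemma psiF_ge_one {p : ℝ} (hp : 0 < p) (hc : 0 ≤ (p-1)*(p-2)) {X : ℝ} (hX : 0 < X) :
    psiF p 1 ≤ psiF p X := by
  rcases le_or_gt X 1 with h | h
  · have := tangent_conv hp hc (right_mem_Ioc.mpr one_pos) ⟨hX, h⟩
    rw [dpsiF_one] at this; linarith
  · have hXi : X⁻¹ ∈ Ioc (0:ℝ) 1 := ⟨by positivity, by
      rw [inv_le_one₀ hX]; exact h.le⟩
    have := tangent_conv hp hc (right_mem_Ioc.mpr one_pos) hXi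
    rw [dpsiF_one, psiF_symm hX] at this
    simp only [zero_mul, add_zero] at this
    exact this

end AuxCalculus

/-- The one-homogeneous function `G_p` (for `p > 0`) on the cone `Ω = {x,y ≥ 0, 0 ≤ z ≤ √(xy)}`:
`G_p(x,y,z) = x + y + ((v^{1/p} + v^{-1/p})^p - (v + v⁻¹)) z`, where
`v = min{x/z, y/z, 1}` for `z > 0` and `v = 1` for `z = 0`. -/
noncomputable def Gp (p : ℝ) (u : ℝ × ℝ × ℝ) : ℝ :=
  let v : ℝ := if u.2.2 = 0 then 1 else min (min (u.1 / u.2.2) (u.2.1 / u.2.2)) 1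
  u.1 + u.2.1 + ((v ^ (1 / p) + v ^ (-(1 / p))) ^ p - (v + v⁻¹)) * u.2.2


section AuxPlanes

lemma Gp_eq (p x y z : ℝ) (hz : z ≠ 0) :
    Gp p (x, y, z) = x + y + psiF p (min (min (x/z) (y/z)) 1) * z := by
  simp only [Gp, psiF, hz, if_false]
  ring

lemma Gp_zero (p x y : ℝ) : Gp p (x, y, 0) = x + y := by
  simp [Gp]

lemma Gp_swap (p x y z : ℝ) : Gp p (x, y, z) = Gp p (y, x, z) := by
  simp only [Gp, min_comm (x/z) (y/z)]
  ring

lemma coeff_conc {p : ℝ} (hp : 0 < p) (hc : (p-1)*(p-2) ≤ 0) {s X Y : ℝ}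
    (hs : s ∈ Ioc (0:ℝ) 1) (hX : 0 < X) (hY : 0 < Y) (hXY : 1 ≤ X * Y) :
    psiF p (min (min X Y) 1) ≤ psiF p s + dpsiF p s * (X - s) := by
  rcases le_or_gt X 1 with h1 | h1
  · have hXY' : X ≤ Y := by nlinarith
    rw [min_eq_left hXY', min_eq_left h1]
    exact tangent_conc hp hc hs ⟨hX, h1⟩
  · have hv : 0 < min (min X Y) 1 := lt_min (lt_min hX hY) one_pos
    have h2 : psiF p (min (min X Y) 1) ≤ psiF p 1 := psiF_le_one hp hc hv
    have h3 : psiF p 1 ≤ psiF p s + dpsiF p s * (1 - s) :=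
      tangent_conc hp hc hs ⟨one_pos, le_refl 1⟩
    have h4 : dpsiF p s * (1 - s) ≤ dpsiF p s * (X - s) :=
      mul_le_mul_of_nonneg_left (by linarith) (dpsiF_nonneg hp hc hs)
    linarith

lemma coeff_conv {p : ℝ} (hp : 0 < p) (hc : 0 ≤ (p-1)*(p-2)) {s X Y : ℝ}
    (hs : s ∈ Ioc (0:ℝ) 1) (hX : 0 < X) (hY : 0 < Y) (hXY : 1 ≤ X * Y) :
    psiF p s + dpsiF p s * (X - s) ≤ psiF p (min (min X Y) 1) := by
  rcases le_or_gt X 1 with h1 | h1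
  · have hXY' : X ≤ Y := by nlinarith
    rw [min_eq_left hXY', min_eq_left h1]
    exact tangent_conv hp hc hs ⟨hX, h1⟩
  · have hv : 0 < min (min X Y) 1 := lt_min (lt_min hX hY) one_pos
    have h2 : psiF p 1 ≤ psiF p (min (min X Y) 1) := psiF_ge_one hp hc hv
    have h3 : psiF p s + dpsiF p s * (1 - s) ≤ psiF p 1 :=
      tangent_conv hp hc hs ⟨one_pos, le_refl 1⟩
    have h4 : dpsiF p s * (X - s) ≤ dpsiF p s * (1 - s) :=
      mul_le_mul_of_nonpos_left (by linarith) (dpsiF_nonpos hp hc hs)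
    linarith

lemma omega_facts {x y z : ℝ} (hx : 0 ≤ x) (hy : 0 ≤ y) (hz : 0 < z)
    (hzs : z ≤ Real.sqrt (x*y)) :
    0 < x ∧ 0 < y ∧ 1 ≤ (x/z) * (y/z) := by
  have hsp : 0 < Real.sqrt (x*y) := lt_of_lt_of_le hz hzs
  have hxy : 0 < x * y := Real.sqrt_pos.mp hsp
  have hx0 : 0 < x := by
    rcases hx.eq_or_lt with h | h
    · exfalso; rw [← h] at hxy; nlinarith
    · exact h
  have hy0 : 0 < y := by
    rcases hy.eq_or_lt with h | h
    · exfalso; rw [← h] at hxy; nlinarith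
    · exact h
  have hz2 : z^2 ≤ x*y := by
    have := pow_le_pow_left₀ hz.le hzs 2
    rwa [Real.sq_sqrt hxy.le] at this
  refine ⟨hx0, hy0, ?_⟩
  rw [div_mul_div_comm, le_div_iff₀ (by positivity), one_mul]
  nlinarith

lemma plane_conc {p : ℝ} (hp : 0 < p) (hc : (p-1)*(p-2) ≤ 0) {s : ℝ}
    (hs : s ∈ Ioc (0:ℝ) 1) {x y z : ℝ} (hx : 0 ≤ x) (hy : 0 ≤ y) (hz : 0 ≤ z)
    (hzs : z ≤ Real.sqrt (x*y)) :
    Gp p (x, y, z) ≤ (1 + dpsiF p s) * x + y + (psiF p s - s * dpsiF p s) * z := by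
  rcases hz.eq_or_lt with h0 | h0
  · rw [← h0, Gp_zero]
    have := dpsiF_nonneg hp hc hs
    nlinarith
  · obtain ⟨hx0, hy0, hXY⟩ := omega_facts hx hy h0 hzs
    rw [Gp_eq p x y z h0.ne']
    have h4 := coeff_conc hp hc hs (div_pos hx0 h0) (div_pos hy0 h0) hXY
    have h5 := mul_le_mul_of_nonneg_right h4 h0.le
    have hXz : x / z * z = x := div_mul_cancel₀ x h0.ne'
    have he : (psiF p s + dpsiF p s * (x/z - s)) * z
        = psiF p s * z + dpsiF p s * (x/z*z) - dpsiF p s * (s*z) := by ring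
    rw [he, hXz] at h5
    linarith

lemma plane_conv {p : ℝ} (hp : 0 < p) (hc : 0 ≤ (p-1)*(p-2)) {s : ℝ}
    (hs : s ∈ Ioc (0:ℝ) 1) {x y z : ℝ} (hx : 0 ≤ x) (hy : 0 ≤ y) (hz : 0 ≤ z)
    (hzs : z ≤ Real.sqrt (x*y)) :
    (1 + dpsiF p s) * x + y + (psiF p s - s * dpsiF p s) * z ≤ Gp p (x, y, z) := by
  rcases hz.eq_or_lt with h0 | h0
  · rw [← h0, Gp_zero]
    have := dpsiF_nonpos hp hc hs
    nlinarith
  · obtain ⟨hx0, hy0, hXY⟩ := omega_facts hx hy h0 hzs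
    rw [Gp_eq p x y z h0.ne']
    have h4 := coeff_conv hp hc hs (div_pos hx0 h0) (div_pos hy0 h0) hXY
    have h5 := mul_le_mul_of_nonneg_right h4 h0.le
    have hXz : x / z * z = x := div_mul_cancel₀ x h0.ne'
    have he : (psiF p s + dpsiF p s * (x/z - s)) * z
        = psiF p s * z + dpsiF p s * (x/z*z) - dpsiF p s * (s*z) := by ring
    rw [he, hXz] at h5
    linarith

lemma sqrt_combo {a b c d t1 t2 : ℝ} (ha : 0 ≤ a) (hb : 0 ≤ b) (hc : 0 ≤ c) (hd : 0 ≤ d)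
    (ht1 : 0 ≤ t1) (ht2 : 0 ≤ t2) :
    t1 * Real.sqrt (a*c) + t2 * Real.sqrt (b*d)
      ≤ Real.sqrt ((t1*a + t2*b) * (t1*c + t2*d)) := by
  have h1 : Real.sqrt (a*c) * Real.sqrt (b*d) = Real.sqrt (a*d) * Real.sqrt (b*c) := by
    rw [← Real.sqrt_mul (by positivity), ← Real.sqrt_mul (by positivity)]
    ring_nf
  apply Real.le_sqrt_of_sq_le
  have e1 := Real.sq_sqrt (mul_nonneg ha hc)
  have e2 := Real.sq_sqrt (mul_nonneg hb hd)
  have e3 := Real.sq_sqrt (mul_nonneg ha hd)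
  have e4 := Real.sq_sqrt (mul_nonneg hb hc)
  calc (t1 * Real.sqrt (a*c) + t2 * Real.sqrt (b*d))^2
      = t1^2 * Real.sqrt (a*c)^2 + 2*t1*t2*(Real.sqrt (a*c) * Real.sqrt (b*d))
          + t2^2 * Real.sqrt (b*d)^2 := by ring
    _ = t1^2*(a*c) + 2*t1*t2*(Real.sqrt (a*d) * Real.sqrt (b*c)) + t2^2*(b*d) := by
          rw [e1, e2, h1]
    _ ≤ t1^2*(a*c) + t1*t2*(Real.sqrt (a*d)^2 + Real.sqrt (b*c)^2) + t2^2*(b*d) := by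
          nlinarith [mul_nonneg (mul_nonneg ht1 ht2)
            (sq_nonneg (Real.sqrt (a*d) - Real.sqrt (b*c)))]
    _ = (t1*a + t2*b) * (t1*c + t2*d) := by rw [e3, e4]; ring

lemma convexOmega : Convex ℝ {u : ℝ × ℝ × ℝ |
    0 ≤ u.1 ∧ 0 ≤ u.2.1 ∧ 0 ≤ u.2.2 ∧ u.2.2 ≤ Real.sqrt (u.1 * u.2.1)} := by
  rintro ⟨a1, a2, a3⟩ ⟨ha1, ha2, ha3, ha4⟩ ⟨b1, b2, b3⟩ ⟨hb1, hb2, hb3, hb4⟩ t1 t2 ht1 ht2 hsum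
  simp only [Set.mem_setOf_eq, Prod.smul_mk, Prod.mk_add_mk, smul_eq_mul]
  refine ⟨by positivity, by positivity, by positivity, ?_⟩
  calc t1 * a3 + t2 * b3 ≤ t1 * Real.sqrt (a1*a2) + t2 * Real.sqrt (b1*b2) := by
        have := mul_le_mul_of_nonneg_left ha4 ht1
        have := mul_le_mul_of_nonneg_left hb4 ht2
        linarith
    _ ≤ Real.sqrt ((t1*a1 + t2*b1) * (t1*a2 + t2*b2)) :=
        sqrt_combo ha1 hb1 ha2 hb2 ht1 ht2

/-- choose the touching parameter `s` and whether to swap; returns the touching equality. -/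
lemma exists_plane_aux {p : ℝ} (hp : 0 < p) {mx my mz : ℝ} (h1 : 0 ≤ mx) (h2 : 0 ≤ my)
    (h3 : 0 ≤ mz) (h4 : mz ≤ Real.sqrt (mx*my)) (hxy : mx ≤ my) :
    ∃ s ∈ Ioc (0:ℝ) 1,
      (1 + dpsiF p s) * mx + my + (psiF p s - s * dpsiF p s) * mz = Gp p (mx, my, mz) := by
  rcases h3.eq_or_lt with h0 | h0
  · refine ⟨1, ⟨one_pos, le_refl 1⟩, ?_⟩
    rw [← h0, Gp_zero, dpsiF_one]
    ring
  · obtain ⟨hx0, hy0, hXY⟩ := omega_facts h1 h2 h0 h4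
    have hdiv : mx / mz ≤ my / mz := by
      rw [div_eq_mul_inv, div_eq_mul_inv]
      exact mul_le_mul_of_nonneg_right hxy (inv_nonneg.mpr h0.le)
    refine ⟨min (mx/mz) 1, ⟨lt_min (div_pos hx0 h0) one_pos, min_le_right _ _⟩, ?_⟩
    rw [Gp_eq p mx my mz h0.ne', min_eq_left hdiv]
    have key : dpsiF p (min (mx/mz) 1) * (mx - (min (mx/mz) 1) * mz) = 0 := by
      rcases le_or_gt (mx/mz) 1 with h | h
      · rw [min_eq_left h, div_mul_cancel₀ mx h0.ne']
        ring
      · rw [min_eq_right h.le, dpsiF_one]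
        ring
    nlinarith [key]


end AuxPlanes

/-- `G_p` is concave on `Ω` for `p ∈ (1,2)`, and convex on `Ω` for `p ∈ (0,1] ∪ [2,∞)`. -/
theorem statement19 (p : ℝ)
    (Ω : Set (ℝ × ℝ × ℝ))
    (hΩ : Ω = {u : ℝ × ℝ × ℝ |
      0 ≤ u.1 ∧ 0 ≤ u.2.1 ∧ 0 ≤ u.2.2 ∧ u.2.2 ≤ Real.sqrt (u.1 * u.2.1)}) :
    (p ∈ Set.Ioo (1 : ℝ) 2 → ConcaveOn ℝ Ω (Gp p)) ∧
    (p ∈ Set.Ioc (0 : ℝ) 1 ∪ Set.Ici (2 : ℝ) → ConvexOn ℝ Ω (Gp p)) := by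
  subst hΩ
  constructor
  · rintro ⟨hp1, hp2⟩
    have hp : 0 < p := by linarith
    have hc : (p-1)*(p-2) ≤ 0 := by nlinarith
    refine ⟨convexOmega, ?_⟩
    rintro ⟨ax, ay, az⟩ ha ⟨bx, by', bz⟩ hb t1 t2 ht1 ht2 hsum
    obtain ⟨ha1, ha2, ha3, ha4⟩ := ha
    obtain ⟨hb1, hb2, hb3, hb4⟩ := hb
    have hm : (t1 • (ax, ay, az) + t2 • (bx, by', bz) :  ℝ × ℝ × ℝ)
        = (t1*ax + t2*bx, t1*ay + t2*by', t1*az + t2*bz) := by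
      simp [Prod.ext_iff, smul_eq_mul]
    set mx := t1*ax + t2*bx with hmx
    set my := t1*ay + t2*by' with hmy
    set mz := t1*az + t2*bz with hmz
    have hmem : (0 ≤ mx ∧ 0 ≤ my ∧ 0 ≤ mz ∧ mz ≤ Real.sqrt (mx * my)) := by
      have := convexOmega (x := (ax,ay,az)) (y := (bx,by',bz))
        ⟨ha1,ha2,ha3,ha4⟩ ⟨hb1,hb2,hb3,hb4⟩ ht1 ht2 hsum
      rw [hm] at this
      exact this
    obtain ⟨hm1, hm2, hm3, hm4⟩ := hmem
    -- get a supporting plane (α, β, γ) at m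
    obtain ⟨α, β, γ, htouch, hbound⟩ :
        ∃ α β γ : ℝ, α*mx + β*my + γ*mz = Gp p (mx, my, mz) ∧
          ∀ x y z : ℝ, 0 ≤ x → 0 ≤ y → 0 ≤ z → z ≤ Real.sqrt (x*y) →
            Gp p (x,y,z) ≤ α*x + β*y + γ*z := by
      rcases le_total mx my with hxy | hxy
      · obtain ⟨s, hs, htouch⟩ := exists_plane_aux hp hm1 hm2 hm3 hm4 hxy
        exact ⟨1 + dpsiF p s, 1, psiF p s - s * dpsiF p s,
          by linarith [htouch],
          fun x y z hx hy hz hzs => by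
            have := plane_conc hp hc hs hx hy hz hzs; linarith⟩
      · obtain ⟨s, hs, htouch⟩ := exists_plane_aux hp hm2 hm1 hm3
          (by rwa [mul_comm] at hm4) hxy
        refine ⟨1, 1 + dpsiF p s, psiF p s - s * dpsiF p s, ?_, ?_⟩
        · rw [Gp_swap]
          linarith [htouch]
        · intro x y z hx hy hz hzs
          rw [Gp_swap]
          have := plane_conc hp hc hs hy hx hz (by rwa [mul_comm] at hzs)
          linarith
    have hba := hbound ax ay az ha1 ha2 ha3 ha4
    have hbb := hbound bx by' bz hb1 hb2 hb3 hb4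
    rw [hm]
    simp only [smul_eq_mul]
    calc t1 * Gp p (ax,ay,az) + t2 * Gp p (bx,by',bz)
        ≤ t1 * (α*ax+β*ay+γ*az) + t2 * (α*bx+β*by'+γ*bz) := by
          have hq1 := mul_le_mul_of_nonneg_left hba ht1
          have hq2 := mul_le_mul_of_nonneg_left hbb ht2
          linarith
      _ = α*mx + β*my + γ*mz := by rw [hmx, hmy, hmz]; ring
      _ = Gp p (mx,my,mz) := htouch
  · intro hpm
    have hp : 0 < p := by
      rcases hpm with h | h
      · exact h.1
      · simp at h; linarith
    have hc : 0 ≤ (p-1)*(p-2) := by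
      rcases hpm with h | h
      · obtain ⟨h1, h2⟩ := h; nlinarith
      · simp at h; nlinarith
    refine ⟨convexOmega, ?_⟩
    rintro ⟨ax, ay, az⟩ ha ⟨bx, by', bz⟩ hb t1 t2 ht1 ht2 hsum
    obtain ⟨ha1, ha2, ha3, ha4⟩ := ha
    obtain ⟨hb1, hb2, hb3, hb4⟩ := hb
    have hm : (t1 • (ax, ay, az) + t2 • (bx, by', bz) :  ℝ × ℝ × ℝ)
        = (t1*ax + t2*bx, t1*ay + t2*by', t1*az + t2*bz) := by
      simp [Prod.ext_iff, smul_eq_mul]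
    set mx := t1*ax + t2*bx with hmx
    set my := t1*ay + t2*by' with hmy
    set mz := t1*az + t2*bz with hmz
    have hmem : (0 ≤ mx ∧ 0 ≤ my ∧ 0 ≤ mz ∧ mz ≤ Real.sqrt (mx * my)) := by
      have := convexOmega (x := (ax,ay,az)) (y := (bx,by',bz))
        ⟨ha1,ha2,ha3,ha4⟩ ⟨hb1,hb2,hb3,hb4⟩ ht1 ht2 hsum
      rw [hm] at this
      exact this
    obtain ⟨hm1, hm2, hm3, hm4⟩ := hmem
    obtain ⟨α, β, γ, htouch, hbound⟩ :
        ∃ α β γ : ℝ, α*mx + β*my + γ*mz = Gp p (mx, my, mz) ∧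
          ∀ x y z : ℝ, 0 ≤ x → 0 ≤ y → 0 ≤ z → z ≤ Real.sqrt (x*y) →
            α*x + β*y + γ*z ≤ Gp p (x,y,z) := by
      rcases le_total mx my with hxy | hxy
      · obtain ⟨s, hs, htouch⟩ := exists_plane_aux hp hm1 hm2 hm3 hm4 hxy
        exact ⟨1 + dpsiF p s, 1, psiF p s - s * dpsiF p s,
          by linarith [htouch],
          fun x y z hx hy hz hzs => by
            have := plane_conv hp hc hs hx hy hz hzs; linarith⟩
      · obtain ⟨s, hs, htouch⟩ := exists_plane_aux hp hm2 hm1 hm3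
          (by rwa [mul_comm] at hm4) hxy
        refine ⟨1, 1 + dpsiF p s, psiF p s - s * dpsiF p s, ?_, ?_⟩
        · rw [Gp_swap]
          linarith [htouch]
        · intro x y z hx hy hz hzs
          rw [Gp_swap]
          have := plane_conv hp hc hs hy hx hz (by rwa [mul_comm] at hzs)
          linarith
    have hba := hbound ax ay az ha1 ha2 ha3 ha4
    have hbb := hbound bx by' bz hb1 hb2 hb3 hb4
    rw [hm]
    simp only [smul_eq_mul]
    calc Gp p (mx,my,mz) = α*mx + β*my + γ*mz := htouch.symm
      _ = t1 * (α*ax+β*ay+γ*az) + t2 * (α*bx+β*by'+γ*bz) := by rw [hmx, hmy, hmz]; ring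
      _ ≤ t1 * Gp p (ax,ay,az) + t2 * Gp p (bx,by',bz) := by
          have hq1 := mul_le_mul_of_nonneg_left hba ht1
          have hq2 := mul_le_mul_of_nonneg_left hbb ht2
          linarith
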